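/- arXiv:1503.00665 — 2 statements merged into one kernel-verified Lean document; each statement's English description precedes it below -/
import Mathlib

section
/- Let R be a ring, N a natural number, and C = ⊕_{i=0}^{N} C_i a graded R-module concentrated in the finitely many degrees 0, …, N. Let d : C → C be an R-linear map with d ∘ d = 0 that strictly increases degree (for j ≤ i, the composite π_j ∘ d ∘ ι_i is zero), and let d₁ be its degree-1 homogeneous component (so that d₁ ∘ d₁ = 0). If the complex (C, d₁) is acyclic, i.e. ker d₁ = range d₁, then (C, d) is acyclic: ker d = range d. -/
open DirectSum

theorem stmt_5 (R : Type) [Ring R] (N : ℕ) (C : ℕ → Type)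
    [∀ i, AddCommGroup (C i)] [∀ i, Module R (C i)]
    (hbdd : ∀ i : ℕ, N < i → Subsingleton (C i))
    (d : (⨁ i, C i) →ₗ[R] ⨁ i, C i)
    (hd : d.comp d = 0)
    (hdeg : ∀ i j : ℕ, j ≤ i →
      (DirectSum.component R ℕ C j).comp (d.comp (DirectSum.lof R ℕ C i)) = 0)
    (d1 : (⨁ i, C i) →ₗ[R] ⨁ i, C i)
    (hd1 : ∀ (i : ℕ) (x : C i),
      d1 (DirectSum.lof R ℕ C i x) =
        DirectSum.lof R ℕ C (i + 1)
          (DirectSum.component R ℕ C (i + 1) (d (DirectSum.lof R ℕ C i x))))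
    (hacyclic : LinearMap.ker d1 = LinearMap.range d1) :
    LinearMap.ker d = LinearMap.range d := by
  classical
  have hdd : ∀ x, d (d x) = 0 := fun x => LinearMap.congr_fun hd x
  have hdeg' : ∀ (i j : ℕ), j ≤ i → ∀ b : C i,
      DirectSum.component R ℕ C j (d (DirectSum.lof R ℕ C i b)) = 0 :=
    fun i j h b => LinearMap.congr_fun (hdeg i j h) b
  -- d strictly increases filtration
  have hdx : ∀ (k : ℕ) (x : ⨁ i, C i),
      (∀ j, j < k → DirectSum.component R ℕ C j x = 0) →
      ∀ j, j ≤ k → DirectSum.component R ℕ C j (d x) = 0 := by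
    intro k x hx j hj
    rw [← DirectSum.sum_support_of x, map_sum, map_sum]
    apply Finset.sum_eq_zero
    intro i hi
    have hik : k ≤ i := by
      by_contra h
      push_neg at h
      have h0 := hx i h
      rw [← DirectSum.apply_eq_component] at h0
      exact (DFinsupp.mem_support_iff.mp hi) h0
    rw [← DirectSum.lof_eq_of R]
    exact hdeg' i j (le_trans hj hik) (x i)
  -- d1 has no component in degree 0
  have hcomp0 : ∀ z, DirectSum.component R ℕ C 0 (d1 z) = 0 := by
    intro z
    refine DirectSum.induction_on z ?_ ?_ ?_
    · simp
    · intro i b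
      rw [← DirectSum.lof_eq_of R, hd1, DirectSum.component.of, dif_neg (Nat.succ_ne_zero i)]
    · intro x y hx hy
      rw [map_add, map_add, hx, hy, add_zero]
  -- degree k+1 component of d1 z is d1 applied to the degree k component of z
  have hcompsucc : ∀ (k : ℕ) (z : ⨁ i, C i),
      DirectSum.lof R ℕ C (k + 1) (DirectSum.component R ℕ C (k + 1) (d1 z))
        = d1 (DirectSum.lof R ℕ C k (DirectSum.component R ℕ C k z)) := by
    intro k z
    refine DirectSum.induction_on z ?_ ?_ ?_
    · simp
    · intro i b
      rw [← DirectSum.lof_eq_of R]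
      rcases eq_or_ne i k with rfl | h
      · rw [DirectSum.component.lof_self, hd1 _ b, DirectSum.component.lof_self]
      · rw [DirectSum.component.of, dif_neg h, map_zero, map_zero,
          hd1, DirectSum.component.of, dif_neg (fun h' => h (Nat.succ_injective h')), map_zero]
    · intro x y hx hy
      simp only [map_add, hx, hy]
  -- kill the leading coefficient of a cycle supported in degrees ≥ k
  have step : ∀ (k : ℕ) (x : ⨁ i, C i), d x = 0 →
      (∀ j, j < k → DirectSum.component R ℕ C j x = 0) →
      ∃ w, ∀ j, j < k + 1 → DirectSum.component R ℕ C j (x - d w) = 0 := by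
    intro k x hdx0 hklt
    have hrest : ∀ j, j < k + 1 →
        DirectSum.component R ℕ C j
          (x - DirectSum.lof R ℕ C k (DirectSum.component R ℕ C k x)) = 0 := by
      intro j hj
      rw [map_sub]
      rcases eq_or_ne j k with rfl | h
      · rw [DirectSum.component.lof_self, sub_self]
      · rw [DirectSum.component.of, dif_neg (Ne.symm h), hklt j (by omega), sub_zero]
    have hker : d1 (DirectSum.lof R ℕ C k (DirectSum.component R ℕ C k x)) = 0 := by
      have h1 : DirectSum.component R ℕ C (k + 1)
          (d (x - DirectSum.lof R ℕ C k (DirectSum.component R ℕ C k x))) = 0 :=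
        hdx (k + 1) _ hrest (k + 1) le_rfl
      rw [map_sub, map_sub, hdx0, map_zero, zero_sub, neg_eq_zero] at h1
      rw [hd1, h1, map_zero]
    obtain ⟨z, hz⟩ : DirectSum.lof R ℕ C k (DirectSum.component R ℕ C k x)
        ∈ LinearMap.range d1 := by
      rw [← hacyclic]
      exact hker
    rcases k with _ | t
    · -- degree 0: the leading coefficient is zero, no correction needed
      have ha0 : DirectSum.component R ℕ C 0 x = 0 := by
        have h0 := hcomp0 z
        rw [hz, DirectSum.component.lof_self] at h0
        exact h0
      refine ⟨0, fun j hj => ?_⟩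
      rw [map_zero, sub_zero]
      have hj0 : j = 0 := by omega
      rw [hj0, ha0]
    · -- degree t+1: correct by d applied to the degree t component of z
      refine ⟨DirectSum.lof R ℕ C t (DirectSum.component R ℕ C t z), fun j hj => ?_⟩
      have heq : DirectSum.lof R ℕ C (t + 1) (DirectSum.component R ℕ C (t + 1) x)
          = d1 (DirectSum.lof R ℕ C t (DirectSum.component R ℕ C t z)) := by
        have h2 := hcompsucc t z
        rw [hz, DirectSum.component.lof_self] at h2
        exact h2
      rw [hd1] at heq
      have ha : DirectSum.component R ℕ C (t + 1) x
          = DirectSum.component R ℕ C (t + 1)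
              (d (DirectSum.lof R ℕ C t (DirectSum.component R ℕ C t z))) := by
        have := congrArg (DirectSum.component R ℕ C (t + 1)) heq
        rwa [DirectSum.component.lof_self, DirectSum.component.lof_self] at this
      rw [map_sub]
      rcases eq_or_ne j (t + 1) with rfl | h
      · rw [← ha, sub_self]
      · have hjt : j < t + 1 := by omega
        rw [hklt j hjt, hdeg' t j (by omega), sub_zero]
  -- main downward induction
  have main : ∀ (m : ℕ) (x : ⨁ i, C i), d x = 0 →
      (∀ j, j < N + 1 - m → DirectSum.component R ℕ C j x = 0) → ∃ y, d y = x := by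
    intro m
    induction m with
    | zero =>
      intro x _ hcomp
      refine ⟨0, ?_⟩
      rw [map_zero]
      refine (DirectSum.ext_component R fun j => ?_).symm
      rw [map_zero]
      rcases le_or_gt j N with hj | hj
      · exact hcomp j (by omega)
      · have := hbdd j hj
        exact Subsingleton.elim _ _
    | succ m ih =>
      intro x hdx0 hcomp
      obtain ⟨w, hw⟩ := step (N - m) x hdx0 (fun j hj => hcomp j (by omega))
      obtain ⟨y, hy⟩ := ih (x - d w) (by rw [map_sub, hdx0, hdd, zero_sub, neg_zero])
        (fun j hj => hw j (by omega))
      exact ⟨w + y, by rw [map_add, hy, add_sub_cancel]⟩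
  ext x
  simp only [LinearMap.mem_ker, LinearMap.mem_range]
  constructor
  · intro hx
    obtain ⟨y, hy⟩ := main (N + 1) x hx (fun j hj => absurd hj (by omega))
    exact ⟨y, hy⟩
  · rintro ⟨y, rfl⟩
    exact hdd y
end

section
/- Let C = ⊕_{i=0}^{N} C_i be a graded 𝔽₂-vector space concentrated in the finitely many degrees 0, …, N (where 𝔽₂ = ZMod 2), let D : C → C be a linear map with D ∘ D = 0 that strictly increases degree, and let C′ ⊆ C be a graded subspace with D(C′) ⊆ C′. Let D₁ be the degree-1 homogeneous component of D; note D₁(C′) ⊆ C′. If the restriction of D₁ to C′ is acyclic, i.e. ker(D₁) ∩ C′ = D₁(C′), then the quotient map q : C → C/C′ induces an isomorphism on homology: ker D / range D ≅ ker D̄ / range D̄, where D̄ is the endomorphism of C/C′ induced by D. -/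
open DirectSum

set_option maxHeartbeats 1000000 in
theorem stmt_8 (N : ℕ) (C : ℕ → Type)
    [∀ i, AddCommGroup (C i)] [∀ i, Module (ZMod 2) (C i)]
    (hbdd : ∀ i : ℕ, N < i → Subsingleton (C i))
    (D : (⨁ i, C i) →ₗ[ZMod 2] ⨁ i, C i)
    (hD2 : D.comp D = 0)
    (hdeg : ∀ i j : ℕ, j ≤ i →
      (DirectSum.component (ZMod 2) ℕ C j).comp
        (D.comp (DirectSum.lof (ZMod 2) ℕ C i)) = 0)
    (C' : Submodule (ZMod 2) (⨁ i, C i))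
    (hgr : ∀ x ∈ C', ∀ i : ℕ,
      DirectSum.lof (ZMod 2) ℕ C i (DirectSum.component (ZMod 2) ℕ C i x) ∈ C')
    (hDC' : ∀ x ∈ C', D x ∈ C')
    (D1 : (⨁ i, C i) →ₗ[ZMod 2] ⨁ i, C i)
    (hD1 : ∀ (i : ℕ) (x : C i),
      D1 (DirectSum.lof (ZMod 2) ℕ C i x) =
        DirectSum.lof (ZMod 2) ℕ C (i + 1)
          (DirectSum.component (ZMod 2) ℕ C (i + 1) (D (DirectSum.lof (ZMod 2) ℕ C i x))))
    (hacyc : LinearMap.ker D1 ⊓ C' = Submodule.map D1 C') :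
    ∀ Dbar : ((⨁ i, C i) ⧸ C') →ₗ[ZMod 2] ((⨁ i, C i) ⧸ C'),
      Dbar.comp C'.mkQ = C'.mkQ.comp D →
      ∃ φ : ((LinearMap.ker D) ⧸
              (LinearMap.range D).comap (LinearMap.ker D).subtype) ≃ₗ[ZMod 2]
            ((LinearMap.ker Dbar) ⧸
              (LinearMap.range Dbar).comap (LinearMap.ker Dbar).subtype),
        ∀ (x : LinearMap.ker D) (y : LinearMap.ker Dbar),
          C'.mkQ ↑x = ↑y →
          φ (Submodule.Quotient.mk x) = Submodule.Quotient.mk y := by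
  classical
  have hdeg' : ∀ (i j : ℕ), j ≤ i → ∀ x : C i,
      DirectSum.component (ZMod 2) ℕ C j (D (DirectSum.lof (ZMod 2) ℕ C i x)) = 0 := by
    intro i j h x
    have := LinearMap.congr_fun (hdeg i j h) x
    simpa using this
  -- the degree-j component of D x depends only on components of x below j
  have L1 : ∀ (x : ⨁ i, C i) (j : ℕ),
      (∀ i, i < j → DirectSum.component (ZMod 2) ℕ C i x = 0) →
      DirectSum.component (ZMod 2) ℕ C j (D x) = 0 := by
    intro x j hx
    conv_lhs => rw [← DirectSum.sum_support_of x]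
    rw [map_sum, map_sum]
    apply Finset.sum_eq_zero
    intro i hi
    rcases lt_or_ge i j with h | h
    · exact absurd (hx i h) (DFinsupp.mem_support_iff.mp hi)
    · exact hdeg' i j h (x i)
  have L2a : ∀ b : ⨁ i, C i, DirectSum.component (ZMod 2) ℕ C 0 (D1 b) = 0 := by
    intro b
    conv_lhs => rw [← DirectSum.sum_support_of b]
    rw [map_sum, map_sum]
    apply Finset.sum_eq_zero
    intro i _
    rw [show (DirectSum.of C i (b i)) = DirectSum.lof (ZMod 2) ℕ C i (b i) from rfl, hD1,
      DirectSum.component.of, dif_neg (by omega)]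
  have L2 : ∀ (b : ⨁ i, C i) (j : ℕ),
      DirectSum.component (ZMod 2) ℕ C (j+1) (D1 b) =
      DirectSum.component (ZMod 2) ℕ C (j+1)
        (D1 (DirectSum.lof (ZMod 2) ℕ C j (DirectSum.component (ZMod 2) ℕ C j b))) := by
    intro b j
    conv_lhs => rw [← DirectSum.sum_support_of b]
    rw [map_sum, map_sum, Finset.sum_eq_single j]
    · rfl
    · intro i _ hij
      rw [show (DirectSum.of C i (b i)) = DirectSum.lof (ZMod 2) ℕ C i (b i) from rfl, hD1,
        DirectSum.component.of, dif_neg (by omega)]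
    · intro hj
      rw [DFinsupp.notMem_support_iff.mp hj, map_zero, map_zero, map_zero]
  -- acyclicity of (C', D)
  have key : ∀ (m : ℕ), ∀ c ∈ C', D c = 0 →
      (∀ i, i < N + 1 - m → DirectSum.component (ZMod 2) ℕ C i c = 0) →
      ∃ b ∈ C', D b = c := by
    intro m
    induction m with
    | zero =>
      intro c _ _ hc
      refine ⟨0, C'.zero_mem, ?_⟩
      rw [map_zero]
      symm
      apply DirectSum.ext_component (ZMod 2)
      intro i
      rcases lt_or_ge i (N + 1) with h | h
      · rw [map_zero]
        exact hc i (by omega)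
      · have := hbdd i (by omega)
        exact Subsingleton.elim _ _
    | succ m ih =>
      intro c hcC hDc hc
      by_cases hm : N + 1 ≤ m
      · exact ih c hcC hDc (fun i hi => hc i (by omega))
      obtain ⟨k, hk1, hkm⟩ : ∃ k, N + 1 - m = k + 1 ∧ N + 1 - (m + 1) = k :=
        ⟨N - m, by omega, by omega⟩
      rw [hkm] at hc
      have hrest : ∀ i, i < k + 1 → DirectSum.component (ZMod 2) ℕ C i
          (c - DirectSum.lof (ZMod 2) ℕ C k (DirectSum.component (ZMod 2) ℕ C k c)) = 0 := by
        intro i hi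
        rw [map_sub]
        rcases eq_or_lt_of_le (Nat.lt_succ_iff.mp hi) with h | h
        · subst h
          rw [DirectSum.component.lof_self, sub_self]
        · rw [hc i h, DirectSum.component.of, dif_neg (by omega), sub_zero]
      have hDck : DirectSum.component (ZMod 2) ℕ C (k+1)
          (D (DirectSum.lof (ZMod 2) ℕ C k (DirectSum.component (ZMod 2) ℕ C k c))) = 0 := by
        have e1 : DirectSum.lof (ZMod 2) ℕ C k (DirectSum.component (ZMod 2) ℕ C k c) =
            c - (c - DirectSum.lof (ZMod 2) ℕ C k (DirectSum.component (ZMod 2) ℕ C k c)) := by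
          abel
        rw [e1, map_sub, map_sub, hDc, L1 _ _ hrest, map_zero, sub_zero]
      have hD1ck : D1 (DirectSum.lof (ZMod 2) ℕ C k
          (DirectSum.component (ZMod 2) ℕ C k c)) = 0 := by
        rw [hD1, hDck, map_zero]
      have hmem : DirectSum.lof (ZMod 2) ℕ C k (DirectSum.component (ZMod 2) ℕ C k c) ∈
          Submodule.map D1 C' := by
        rw [← hacyc]
        exact ⟨LinearMap.mem_ker.mpr hD1ck, hgr c hcC k⟩
      obtain ⟨b, hbC, hb⟩ := hmem
      rcases k with _ | j
      · have hck0 : DirectSum.component (ZMod 2) ℕ C 0 c = 0 := by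
          have h0 := L2a b
          rw [hb, DirectSum.component.lof_self] at h0
          exact h0
        refine ih c hcC hDc (fun i hi => ?_)
        rw [hk1] at hi
        interval_cases i
        exact hck0
      · have hb'C : DirectSum.lof (ZMod 2) ℕ C j (DirectSum.component (ZMod 2) ℕ C j b) ∈ C' :=
          hgr b hbC j
        have hcompD1 : DirectSum.component (ZMod 2) ℕ C (j+1)
            (D1 (DirectSum.lof (ZMod 2) ℕ C j (DirectSum.component (ZMod 2) ℕ C j b))) =
            DirectSum.component (ZMod 2) ℕ C (j+1) c := by
          rw [← L2 b j, hb, DirectSum.component.lof_self]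
        have hcompD : DirectSum.component (ZMod 2) ℕ C (j+1)
            (D (DirectSum.lof (ZMod 2) ℕ C j (DirectSum.component (ZMod 2) ℕ C j b))) =
            DirectSum.component (ZMod 2) ℕ C (j+1) c := by
          rw [hD1, DirectSum.component.lof_self] at hcompD1
          exact hcompD1
        have hDDb' : D (D (DirectSum.lof (ZMod 2) ℕ C j
            (DirectSum.component (ZMod 2) ℕ C j b))) = 0 := by
          simpa using LinearMap.congr_fun hD2 _
        have hc2C : c - D (DirectSum.lof (ZMod 2) ℕ C j
            (DirectSum.component (ZMod 2) ℕ C j b)) ∈ C' :=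
          C'.sub_mem hcC (hDC' _ hb'C)
        have hDc2 : D (c - D (DirectSum.lof (ZMod 2) ℕ C j
            (DirectSum.component (ZMod 2) ℕ C j b))) = 0 := by
          rw [map_sub, hDc, hDDb', sub_zero]
        have hc2comp : ∀ i, i < j + 2 → DirectSum.component (ZMod 2) ℕ C i
            (c - D (DirectSum.lof (ZMod 2) ℕ C j
              (DirectSum.component (ZMod 2) ℕ C j b))) = 0 := by
          intro i hi
          rw [map_sub]
          rcases eq_or_lt_of_le (Nat.lt_succ_iff.mp hi) with h | h
          · subst h
            rw [hcompD, sub_self]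
          · rw [hc i h, hdeg' j i (by omega), sub_zero]
        obtain ⟨b2, hb2C, hb2⟩ := ih _ hc2C hDc2 (fun i hi => hc2comp i (by omega))
        refine ⟨DirectSum.lof (ZMod 2) ℕ C j (DirectSum.component (ZMod 2) ℕ C j b) + b2,
          C'.add_mem hb'C hb2C, ?_⟩
        rw [map_add, hb2]
        abel
  have acyc : ∀ c ∈ C', D c = 0 → ∃ b ∈ C', D b = c := by
    intro c hc hdc
    exact key (N + 1) c hc hdc (fun i hi => absurd hi (by omega))
  -- now the homology isomorphism
  intro Dbar hbar
  have hbar' : ∀ x, Dbar (C'.mkQ x) = C'.mkQ (D x) := fun x => LinearMap.congr_fun hbar x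
  have fmem : ∀ x : LinearMap.ker D,
      (C'.mkQ.comp (LinearMap.ker D).subtype) x ∈ LinearMap.ker Dbar := by
    intro x
    rw [LinearMap.mem_ker, LinearMap.comp_apply, Submodule.subtype_apply, hbar',
      LinearMap.mem_ker.mp x.2, map_zero]
  set f : LinearMap.ker D →ₗ[ZMod 2] LinearMap.ker Dbar :=
    LinearMap.codRestrict (LinearMap.ker Dbar) (C'.mkQ.comp (LinearMap.ker D).subtype) fmem
    with hf
  have hfval : ∀ x : LinearMap.ker D, (f x : (⨁ i, C i) ⧸ C') = C'.mkQ ↑x := fun x => rfl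
  set g := ((LinearMap.range Dbar).comap (LinearMap.ker Dbar).subtype).mkQ.comp f with hgdef
  have hgker : ∀ x : LinearMap.ker D,
      (g x = 0 ↔ (f x : (⨁ i, C i) ⧸ C') ∈ LinearMap.range Dbar) := by
    intro x
    rw [hgdef, LinearMap.comp_apply, Submodule.mkQ_apply, Submodule.Quotient.mk_eq_zero,
      Submodule.mem_comap, Submodule.subtype_apply]
  have hg : (LinearMap.range D).comap (LinearMap.ker D).subtype ≤ LinearMap.ker g := by
    intro x hx
    obtain ⟨z, hz⟩ := Submodule.mem_comap.mp hx
    rw [LinearMap.mem_ker, hgker x, hfval]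
    refine ⟨C'.mkQ z, ?_⟩
    rw [hbar', hz]
    rfl
  set φ0 := Submodule.liftQ _ g hg with hφ0
  have hinj : Function.Injective φ0 := by
    rw [← LinearMap.ker_eq_bot]
    apply Submodule.ker_liftQ_eq_bot
    intro x hx
    rw [LinearMap.mem_ker, hgker x, hfval] at hx
    obtain ⟨zbar, hz⟩ := hx
    obtain ⟨z, rfl⟩ := C'.mkQ_surjective zbar
    rw [hbar'] at hz
    have hsub : (↑x : ⨁ i, C i) - D z ∈ C' := by
      rw [← Submodule.Quotient.eq]
      exact (by simpa [Submodule.Quotient.mk''_eq_mk, Submodule.mkQ_apply] using hz.symm)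
    have hDDz : D (D z) = 0 := by simpa using LinearMap.congr_fun hD2 z
    have hDsub : D ((↑x : ⨁ i, C i) - D z) = 0 := by
      rw [map_sub, LinearMap.mem_ker.mp x.2, hDDz, sub_zero]
    obtain ⟨b, _, hb⟩ := acyc _ hsub hDsub
    refine Submodule.mem_comap.mpr ⟨z + b, ?_⟩
    rw [map_add, hb, Submodule.subtype_apply]
    abel
  have hsurj : Function.Surjective φ0 := by
    intro ybar
    obtain ⟨y, rfl⟩ := Submodule.Quotient.mk_surjective _ ybar
    obtain ⟨w, hw⟩ := C'.mkQ_surjective ↑y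
    have hDw : D w ∈ C' := by
      rw [← Submodule.Quotient.mk_eq_zero C', ← Submodule.mkQ_apply, ← hbar', hw]
      exact LinearMap.mem_ker.mp y.2
    have hDDw : D (D w) = 0 := by simpa using LinearMap.congr_fun hD2 w
    obtain ⟨b, hbC, hb⟩ := acyc _ hDw hDDw
    have hxker : w - b ∈ LinearMap.ker D := by
      rw [LinearMap.mem_ker, map_sub, hb, sub_self]
    refine ⟨Submodule.Quotient.mk ⟨w - b, hxker⟩, ?_⟩
    rw [hφ0, Submodule.liftQ_apply, hgdef, LinearMap.comp_apply, Submodule.mkQ_apply]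
    congr 1
    apply Subtype.ext
    rw [hfval]
    show C'.mkQ (w - b) = ↑y
    rw [map_sub, hw, show C'.mkQ b = 0 from (Submodule.Quotient.mk_eq_zero C').mpr hbC,
      sub_zero]
  refine ⟨LinearEquiv.ofBijective φ0 ⟨hinj, hsurj⟩, ?_⟩
  intro x y hxy
  show φ0 (Submodule.Quotient.mk x) = Submodule.Quotient.mk y
  rw [hφ0, Submodule.liftQ_apply, hgdef, LinearMap.comp_apply, Submodule.mkQ_apply]
  congr 1
  apply Subtype.ext
  rw [hfval]
  exact hxy
end
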